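/- Assume (A1), and fix t ∈ {0,1}; write π_{11} = P(T=1 | R=1). Define the naive influence function φ = (R·1{T=t} / (λ₁·π_{t1}))·(Y − ν_t) and the candidate projection g = (−1)^{t+1}·(R·(T − π_{11}) / (λ₁·π_{t1}))·(τ_t(1,X) − ν_t). Then φ − g is orthogonal in L²(P) to the subspace { R·(T − π_{11})·h(X) : h bounded measurable }, i.e., for every bounded measurable h : 𝒳 → ℝ, E[ (φ − g)·R·(T − π_{11})·h(X) ] = 0; since g itself lies in (the L²-closure of) this subspace, g is the orthogonal projection of φ onto it. -/

import Mathlib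

open MeasureTheory ProbabilityTheory Set

noncomputable section

/-- The σ-algebra on `Ω` generated by the map `X`. -/
def sigmaX {Ω 𝒳 : Type*} [MeasurableSpace 𝒳] (X : Ω → 𝒳) : MeasurableSpace Ω :=
  MeasurableSpace.comap X inferInstance

/-- Conditional expectation of `f` given the σ-algebra `m'` under the measure `μ`. -/
def cexp {Ω : Type*} (m' : MeasurableSpace Ω) {m0 : MeasurableSpace Ω} (μ : Measure Ω)
    (f : Ω → ℝ) : Ω → ℝ :=
  MeasureTheory.condExp m' μ f

/-- Conditional probability of the event `s` given the σ-algebra `m'`, as a function. -/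
def cprob {Ω : Type*} (m' : MeasurableSpace Ω) {m0 : MeasurableSpace Ω} (μ : Measure Ω)
    (s : Set Ω) : Ω → ℝ :=
  cexp m' μ (s.indicator fun _ => (1 : ℝ))

/-- `f` and `g` are conditionally independent given the σ-algebra `m'` under `μ` :
conditional probabilities of joint events factorize. -/
def CondIndepFunGiven {Ω β γ : Type*} [MeasurableSpace β]
    [MeasurableSpace γ] (m' : MeasurableSpace Ω) {m0 : MeasurableSpace Ω}
    (f : Ω → β) (g : Ω → γ) (μ : Measure Ω) : Prop :=
  ∀ s u, MeasurableSet s → MeasurableSet u →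
    cprob m' μ (f ⁻¹' s ∩ g ⁻¹' u)
      =ᵐ[μ] fun ω => cprob m' μ (f ⁻¹' s) ω * cprob m' μ (g ⁻¹' u) ω

/-- Reduce an integral of a function vanishing off `s` to the conditional measure. -/
lemma integral_zero_off_set {Ω : Type*} [MeasurableSpace Ω] {P : Measure Ω}
    [IsFiniteMeasure P] {s : Set Ω} {f : Ω → ℝ}
    (hs : MeasurableSet s) (hs0 : P s ≠ 0) (hf0 : ∀ ω, ω ∉ s → f ω = 0) :
    ∫ ω, f ω ∂P = (P s).toReal * ∫ ω, f ω ∂(P[|s]) := by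
  have h1 : ∫ ω, f ω ∂P = ∫ ω in s, f ω ∂P := by
    rw [← integral_indicator hs]
    apply integral_congr_ae
    apply Filter.Eventually.of_forall
    intro ω
    by_cases hω : ω ∈ s
    · simp [Set.indicator_apply, hω]
    · simp [Set.indicator_apply, hω, hf0 ω hω]
  rw [h1, ProbabilityTheory.cond, integral_smul_measure, smul_eq_mul, ← mul_assoc,
    ENNReal.toReal_inv, mul_inv_cancel₀, one_mul]
  exact ENNReal.toReal_ne_zero.mpr ⟨hs0, measure_ne_top P s⟩

/-- The orthogonality computation under the conditional measure, in abstract form. -/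
lemma part1_aux {Ω 𝒳 : Type*} [MeasurableSpace Ω] [MeasurableSpace 𝒳]
    (P : Measure Ω) [IsFiniteMeasure P]
    (X : Ω → 𝒳) (R T Y A : Ω → ℝ)
    (hX : Measurable X) (hT : Measurable T)
    (hRbin : ∀ ω, R ω = 0 ∨ R ω = 1) (hTbin : ∀ ω, T ω = 0 ∨ T ω = 1)
    (s1 : Set Ω) (hs1eq : s1 = {ω | R ω = 1}) (hs1 : MeasurableSet s1) (hPs0 : P s1 ≠ 0)
    (t : ℝ) (ht : t = 0 ∨ t = 1)
    (hYA : ∀ ω, T ω = t → Y ω = A ω)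
    (hAint : Integrable A (P[|s1]))
    (g0 : 𝒳 → ℝ) (hg0m : Measurable g0)
    (hg0eq : MeasureTheory.condExp (MeasurableSpace.comap X inferInstance) (P[|s1]) A
      =ᵐ[P[|s1]] fun ω => g0 (X ω))
    (hg0int : Integrable (fun ω => g0 (X ω)) (P[|s1]))
    (hInd : IndepFun T (fun ω => (A ω, X ω)) (P[|s1]))
    (h : 𝒳 → ℝ) (hhm : Measurable h) (C : ℝ) (hC : ∀ x, |h x| ≤ C)
    (lamR pit nu : ℝ) :
    ∫ ω, ((R ω * (if T ω = t then (1 : ℝ) else 0) / (lamR * pit)) * (Y ω - nu)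
        - (if t = 1 then (1 : ℝ) else -1) *
            (R ω * (T ω - ((P[|s1]) {ω' | T ω' = 1}).toReal) / (lamR * pit)) *
            (MeasureTheory.condExp (MeasurableSpace.comap X inferInstance) (P[|s1]) A ω - nu))
        * (R ω * (T ω - ((P[|s1]) {ω' | T ω' = 1}).toReal) * h (X ω)) ∂P = 0 := by
  set μ₁ : Measure Ω := P[|s1] with hμ₁def
  haveI : IsProbabilityMeasure μ₁ := cond_isProbabilityMeasure hPs0
  set pi1 : ℝ := (μ₁ {ω' | T ω' = 1}).toReal with hpi1def
  set mA : Ω → ℝ := MeasureTheory.condExp (MeasurableSpace.comap X inferInstance) μ₁ A with hmAdef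
  have hm_le : MeasurableSpace.comap X (inferInstance : MeasurableSpace 𝒳) ≤
      (inferInstance : MeasurableSpace Ω) := hX.comap_le
  -- the integrand vanishes off s1
  have hz : ∀ ω, ω ∉ s1 →
      ((R ω * (if T ω = t then (1 : ℝ) else 0) / (lamR * pit)) * (Y ω - nu)
        - (if t = 1 then (1 : ℝ) else -1) * (R ω * (T ω - pi1) / (lamR * pit)) * (mA ω - nu))
        * (R ω * (T ω - pi1) * h (X ω)) = 0 := by
    intro ω hω
    have hR0 : R ω = 0 := by
      rcases hRbin ω with h0 | h1
      · exact h0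
      · exact absurd (by rw [hs1eq]; exact h1) hω
    rw [hR0]; ring
  rw [integral_zero_off_set hs1 hPs0 hz]
  rw [← hμ₁def]
  refine mul_eq_zero_of_right _ ?_
  -- a.e. facts under μ₁
  have hcompl : μ₁ s1ᶜ = 0 := by
    rw [hμ₁def, cond_apply hs1, inter_compl_self, measure_empty, mul_zero]
  have haeR : ∀ᵐ ω ∂μ₁, R ω = 1 := by
    rw [ae_iff]
    have he : {ω | ¬ R ω = 1} ⊆ s1ᶜ := by
      intro ω hω
      simp only [Set.mem_compl_iff, hs1eq, Set.mem_setOf_eq]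
      exact hω
    exact measure_mono_null he hcompl
  -- rewrite the integrand
  have hcongr : ∫ ω, ((R ω * (if T ω = t then (1 : ℝ) else 0) / (lamR * pit)) * (Y ω - nu)
        - (if t = 1 then (1 : ℝ) else -1) * (R ω * (T ω - pi1) / (lamR * pit)) * (mA ω - nu))
        * (R ω * (T ω - pi1) * h (X ω)) ∂μ₁
      = ∫ ω, (1 / (lamR * pit)) *
            ((if T ω = t then (1 : ℝ) else 0) * (T ω - pi1) * (h (X ω) * (A ω - nu)))
          - ((if t = 1 then (1 : ℝ) else -1) / (lamR * pit)) *
            ((T ω - pi1) ^ 2 * (h (X ω) * (g0 (X ω) - nu))) ∂μ₁ := by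
    apply integral_congr_ae
    filter_upwards [haeR, hg0eq] with ω h1 h2
    have h2' : mA ω = g0 (X ω) := h2
    have hIY : (if T ω = t then (1 : ℝ) else 0) * (Y ω - nu)
        = (if T ω = t then (1 : ℝ) else 0) * (A ω - nu) := by
      by_cases hTt : T ω = t
      · rw [if_pos hTt, hYA ω hTt]
      · rw [if_neg hTt]; ring
    rw [h1, h2']
    linear_combination ((T ω - pi1) * h (X ω) / (lamR * pit)) * hIY
  rw [hcongr]
  -- integrability preliminaries
  have hbdd_int : ∀ (f : Ω → ℝ), Measurable f → (∃ D, ∀ ω, |f ω| ≤ D) → Integrable f μ₁ := by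
    rintro f hf ⟨D, hD⟩
    refine ⟨hf.aestronglyMeasurable, HasFiniteIntegral.of_bounded (C := D) ?_⟩
    exact Filter.Eventually.of_forall (by simpa [Real.norm_eq_abs] using hD)
  have hTint_able : Integrable T μ₁ := by
    refine hbdd_int T hT ⟨1, fun ω => ?_⟩
    rcases hTbin ω with h0 | h0 <;> rw [h0] <;> norm_num
  have hTset : MeasurableSet {ω | T ω = 1} := hT (measurableSet_singleton 1)
  have hTint : ∫ ω, T ω ∂μ₁ = pi1 := by
    have hptw : (fun ω => T ω)
        = fun ω => ({ω' | T ω' = 1}).indicator (fun _ => (1 : ℝ)) ω := by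
      funext ω
      rcases hTbin ω with h0 | h0 <;>
        simp [Set.indicator_apply, Set.mem_setOf_eq, h0]
    calc ∫ ω, T ω ∂μ₁ = ∫ ω, ({ω' | T ω' = 1}).indicator (fun _ => (1 : ℝ)) ω ∂μ₁ := by
          rw [← hptw]
      _ = pi1 := integral_indicator_one hTset
  have habs : ∀ ω, |T ω - pi1| ≤ 1 + |pi1| := by
    intro ω
    have h1 := le_abs_self pi1
    have h2 := neg_abs_le pi1
    rw [abs_le]
    rcases hTbin ω with h0 | h0 <;> rw [h0] <;> constructor <;> linarith
  have huB : ∀ ω, |(if T ω = t then (1 : ℝ) else 0) * (T ω - pi1)| ≤ 1 + |pi1| := by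
    intro ω
    rw [abs_mul]
    have h1 : |(if T ω = t then (1 : ℝ) else 0)| ≤ 1 := by split_ifs <;> norm_num
    have h2 := habs ω
    have h3 := abs_nonneg (T ω - pi1)
    have h4 := abs_nonneg (if T ω = t then (1 : ℝ) else 0)
    nlinarith
  have hvB : ∀ ω, |(T ω - pi1) ^ 2| ≤ (1 + |pi1|) ^ 2 := by
    intro ω
    rw [abs_pow]
    exact pow_le_pow_left₀ (abs_nonneg _) (habs ω) 2
  have huMeas : Measurable (fun ω => (if T ω = t then (1 : ℝ) else 0) * (T ω - pi1)) :=
    (Measurable.ite (hT (measurableSet_singleton t)) measurable_const measurable_const).mul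
      (hT.sub measurable_const)
  have hvMeas : Measurable (fun ω => (T ω - pi1) ^ 2) := (hT.sub measurable_const).pow_const 2
  have hu_int : Integrable (fun ω => (if T ω = t then (1 : ℝ) else 0) * (T ω - pi1)) μ₁ :=
    hbdd_int _ huMeas ⟨1 + |pi1|, huB⟩
  have hv_int : Integrable (fun ω => (T ω - pi1) ^ 2) μ₁ :=
    hbdd_int _ hvMeas ⟨(1 + |pi1|) ^ 2, hvB⟩
  have hbd : ∀ᵐ ω ∂μ₁, ‖h (X ω)‖ ≤ C := Filter.Eventually.of_forall (fun ω => by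
    simpa [Real.norm_eq_abs] using hC (X ω))
  have hhXsm : AEStronglyMeasurable (fun ω => h (X ω)) μ₁ :=
    (hhm.comp hX).aestronglyMeasurable
  have hp_int : Integrable (fun ω => h (X ω) * (A ω - nu)) μ₁ :=
    (hAint.sub (integrable_const nu)).bdd_mul hhXsm hbd
  have hq_int : Integrable (fun ω => h (X ω) * (g0 (X ω) - nu)) μ₁ :=
    (hg0int.sub (integrable_const nu)).bdd_mul hhXsm hbd
  have hup_int : Integrable
      (fun ω => (if T ω = t then (1 : ℝ) else 0) * (T ω - pi1) * (h (X ω) * (A ω - nu))) μ₁ :=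
    hp_int.bdd_mul huMeas.aestronglyMeasurable
      (Filter.Eventually.of_forall fun ω => by simpa [Real.norm_eq_abs] using huB ω)
  have hvq_int : Integrable
      (fun ω => (T ω - pi1) ^ 2 * (h (X ω) * (g0 (X ω) - nu))) μ₁ :=
    hq_int.bdd_mul hvMeas.aestronglyMeasurable
      (Filter.Eventually.of_forall fun ω => by simpa [Real.norm_eq_abs] using hvB ω)
  -- independence
  have hIndup : IndepFun (fun ω => (if T ω = t then (1 : ℝ) else 0) * (T ω - pi1))
      (fun ω => h (X ω) * (A ω - nu)) μ₁ := by
    have hφ : Measurable (fun x : ℝ => (if x = t then (1 : ℝ) else 0) * (x - pi1)) :=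
      (Measurable.ite (measurableSet_eq) measurable_const measurable_const).mul
        (measurable_id.sub measurable_const)
    have hψ : Measurable (fun z : ℝ × 𝒳 => h z.2 * (z.1 - nu)) :=
      (hhm.comp measurable_snd).mul (measurable_fst.sub measurable_const)
    exact hInd.comp hφ hψ
  have hIndvq : IndepFun (fun ω => (T ω - pi1) ^ 2)
      (fun ω => h (X ω) * (g0 (X ω) - nu)) μ₁ := by
    have hφ : Measurable (fun x : ℝ => (x - pi1) ^ 2) :=
      (measurable_id.sub measurable_const).pow_const 2
    have hψ : Measurable (fun z : ℝ × 𝒳 => h z.2 * (g0 z.2 - nu)) :=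
      (hhm.comp measurable_snd).mul ((hg0m.comp measurable_snd).sub measurable_const)
    exact hInd.comp hφ hψ
  have hup : ∫ ω, (if T ω = t then (1 : ℝ) else 0) * (T ω - pi1) * (h (X ω) * (A ω - nu)) ∂μ₁
      = (∫ ω, (if T ω = t then (1 : ℝ) else 0) * (T ω - pi1) ∂μ₁)
        * ∫ ω, h (X ω) * (A ω - nu) ∂μ₁ :=
    hIndup.integral_mul_eq_mul_integral hu_int.1 hp_int.1
  have hvq : ∫ ω, (T ω - pi1) ^ 2 * (h (X ω) * (g0 (X ω) - nu)) ∂μ₁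
      = (∫ ω, (T ω - pi1) ^ 2 ∂μ₁) * ∫ ω, h (X ω) * (g0 (X ω) - nu) ∂μ₁ :=
    hIndvq.integral_mul_eq_mul_integral hv_int.1 hq_int.1
  -- values of the T-integrals
  have hIu : ∫ ω, (if T ω = t then (1 : ℝ) else 0) * (T ω - pi1) ∂μ₁
      = (if t = 1 then (1 : ℝ) else -1) * (pi1 * (1 - pi1)) := by
    have hc : (fun ω => (if T ω = t then (1 : ℝ) else 0) * (T ω - pi1))
        = fun ω => ((if (0 : ℝ) = t then (1 : ℝ) else 0) * (0 - pi1))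
          + (((if (1 : ℝ) = t then (1 : ℝ) else 0) * (1 - pi1))
            - ((if (0 : ℝ) = t then (1 : ℝ) else 0) * (0 - pi1))) * T ω := by
      funext ω
      rcases hTbin ω with h0 | h0 <;> rw [h0] <;> ring
    rw [hc, integral_add (integrable_const _) (hTint_able.const_mul _), integral_const,
      integral_const_mul, hTint]
    simp only [measure_univ, probReal_univ, ENNReal.toReal_one, smul_eq_mul, one_mul]
    rcases ht with rfl | rfl
    · norm_num; ring
    · norm_num; ring
  have hIv : ∫ ω, (T ω - pi1) ^ 2 ∂μ₁ = pi1 * (1 - pi1) := by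
    have hc : (fun ω => (T ω - pi1) ^ 2)
        = fun ω => pi1 ^ 2 + ((1 - pi1) ^ 2 - pi1 ^ 2) * T ω := by
      funext ω
      rcases hTbin ω with h0 | h0 <;> rw [h0] <;> ring
    rw [hc, integral_add (integrable_const _) (hTint_able.const_mul _), integral_const,
      integral_const_mul, hTint]
    simp only [measure_univ, probReal_univ, ENNReal.toReal_one, smul_eq_mul, one_mul]
    ring
  -- the conditional expectation identity
  haveI : SigmaFinite (μ₁.trim hm_le) := by infer_instance
  have hsm : StronglyMeasurable[MeasurableSpace.comap X inferInstance] (fun ω => h (X ω)) :=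
    (hhm.comp (comap_measurable X)).stronglyMeasurable
  have hhXA : Integrable (fun ω => h (X ω) * A ω) μ₁ := hAint.bdd_mul hhXsm hbd
  have hhXg0 : Integrable (fun ω => h (X ω) * g0 (X ω)) μ₁ := hg0int.bdd_mul hhXsm hbd
  have hhXc : Integrable (fun ω => h (X ω) * nu) μ₁ :=
    (integrable_const nu).bdd_mul hhXsm hbd
  have hmul : MeasureTheory.condExp (MeasurableSpace.comap X inferInstance) μ₁ ((fun ω => h (X ω)) * A)
      =ᵐ[μ₁] (fun ω => h (X ω)) * MeasureTheory.condExp (MeasurableSpace.comap X inferInstance) μ₁ A :=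
    condExp_mul_of_stronglyMeasurable_left hsm hhXA hAint
  have hkey : ∫ ω, h (X ω) * A ω ∂μ₁ = ∫ ω, h (X ω) * g0 (X ω) ∂μ₁ := by
    calc ∫ ω, h (X ω) * A ω ∂μ₁
        = ∫ ω, (MeasureTheory.condExp (MeasurableSpace.comap X inferInstance) μ₁ ((fun ω => h (X ω)) * A)) ω ∂μ₁ :=
          (integral_condExp hm_le).symm
      _ = ∫ ω, ((fun ω => h (X ω)) * MeasureTheory.condExp (MeasurableSpace.comap X inferInstance) μ₁ A) ω ∂μ₁ :=
          integral_congr_ae hmul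
      _ = ∫ ω, h (X ω) * g0 (X ω) ∂μ₁ := by
          apply integral_congr_ae
          filter_upwards [hg0eq] with ω hω
          have hω' : mA ω = g0 (X ω) := hω
          simp only [Pi.mul_apply]
          rw [← hmAdef, hω']
  have hpq : ∫ ω, h (X ω) * (A ω - nu) ∂μ₁ = ∫ ω, h (X ω) * (g0 (X ω) - nu) ∂μ₁ := by
    have e1 : ∫ ω, h (X ω) * (A ω - nu) ∂μ₁
        = ∫ ω, h (X ω) * A ω ∂μ₁ - ∫ ω, h (X ω) * nu ∂μ₁ := by
      rw [← integral_sub hhXA hhXc]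
      apply integral_congr_ae
      exact Filter.Eventually.of_forall fun ω => by ring
    have e2 : ∫ ω, h (X ω) * (g0 (X ω) - nu) ∂μ₁
        = ∫ ω, h (X ω) * g0 (X ω) ∂μ₁ - ∫ ω, h (X ω) * nu ∂μ₁ := by
      rw [← integral_sub hhXg0 hhXc]
      apply integral_congr_ae
      exact Filter.Eventually.of_forall fun ω => by ring
    rw [e1, e2, hkey]
  -- assemble
  rw [integral_sub (hup_int.const_mul _) (hvq_int.const_mul _), integral_const_mul,
    integral_const_mul, hup, hvq, hIu, hIv, hpq]
  ring

theorem stmt18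
    {Ω 𝒳 : Type*} [MeasurableSpace Ω] [MeasurableSpace 𝒳] [StandardBorelSpace 𝒳]
    (P : Measure Ω) [IsProbabilityMeasure P]
    (X : Ω → 𝒳) (R T Y₁ Y₀ Y : Ω → ℝ) (Yt : ℝ → Ω → ℝ)
    (hX : Measurable X) (hR : Measurable R) (hT : Measurable T)
    (hY₁m : Measurable Y₁) (hY₀m : Measurable Y₀)
    (hRbin : ∀ ω, R ω = 0 ∨ R ω = 1) (hTbin : ∀ ω, T ω = 0 ∨ T ω = 1)
    (hY₁2 : MemLp Y₁ 2 P) (hY₀2 : MemLp Y₀ 2 P)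
    (hY : Y = fun ω => T ω * Y₁ ω + (1 - T ω) * Y₀ ω)
    (hYt1 : Yt 1 = Y₁) (hYt0 : Yt 0 = Y₀)
    (ε : ℝ) (hε : 0 < ε)
    (hlam_pos : 0 < P {ω | R ω = 1}) (hlam_lt : P {ω | R ω = 1} < 1)
    (hlamX : ∀ᵐ ω ∂P, ε ≤ cprob (sigmaX X) P {ω' | R ω' = 1} ω ∧
      cprob (sigmaX X) P {ω' | R ω' = 1} ω ≤ 1 - ε)
    (hpi : ∀ r ∈ ({0, 1} : Set ℝ), ∀ t ∈ ({0, 1} : Set ℝ), ∀ᵐ ω ∂P,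
      ε ≤ cprob (sigmaX X) (ProbabilityTheory.cond P {ω' | R ω' = r}) {ω' | T ω' = t} ω ∧
      cprob (sigmaX X) (ProbabilityTheory.cond P {ω' | R ω' = r}) {ω' | T ω' = t} ω ≤ 1 - ε)
    (hA1 : IndepFun T (fun ω => (Y₁ ω, Y₀ ω, X ω)) (ProbabilityTheory.cond P {ω | R ω = 1}))
    (t : ℝ) (ht : t = 0 ∨ t = 1)
    :
    (∀ h : 𝒳 → ℝ, Measurable h → (∃ C, ∀ x, |h x| ≤ C) →
      ∫ ω, ((R ω * (if T ω = t then (1 : ℝ) else 0) / ((P {ω' | R ω' = 1}).toReal * ((ProbabilityTheory.cond P {ω' | R ω' = 1}) {ω' | T ω' = t}).toReal)) * (Y ω - (∫ ω', Yt t ω' ∂(ProbabilityTheory.cond P {ω'' | R ω'' = 1})))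
        - (if t = 1 then (1 : ℝ) else -1) * (R ω * (T ω - ((ProbabilityTheory.cond P {ω' | R ω' = 1}) {ω' | T ω' = 1}).toReal) / ((P {ω' | R ω' = 1}).toReal * ((ProbabilityTheory.cond P {ω' | R ω' = 1}) {ω' | T ω' = t}).toReal)) * (cexp (sigmaX X) (ProbabilityTheory.cond P {ω' | R ω' = 1}) (Yt t) ω - (∫ ω', Yt t ω' ∂(ProbabilityTheory.cond P {ω'' | R ω'' = 1}))))
        * (R ω * (T ω - ((ProbabilityTheory.cond P {ω' | R ω' = 1}) {ω' | T ω' = 1}).toReal) * h (X ω)) ∂P = 0) ∧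
    (∃ h : 𝒳 → ℝ, Measurable h ∧
      (fun ω => (if t = 1 then (1 : ℝ) else -1) * (R ω * (T ω - ((ProbabilityTheory.cond P {ω' | R ω' = 1}) {ω' | T ω' = 1}).toReal) / ((P {ω' | R ω' = 1}).toReal * ((ProbabilityTheory.cond P {ω' | R ω' = 1}) {ω' | T ω' = t}).toReal)) * (cexp (sigmaX X) (ProbabilityTheory.cond P {ω' | R ω' = 1}) (Yt t) ω - (∫ ω', Yt t ω' ∂(ProbabilityTheory.cond P {ω'' | R ω'' = 1}))))
        =ᵐ[P] fun ω => R ω * (T ω - ((ProbabilityTheory.cond P {ω' | R ω' = 1}) {ω' | T ω' = 1}).toReal) * h (X ω)) := by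
  have hs1 : MeasurableSet {ω | R ω = 1} := hR (measurableSet_singleton 1)
  have hPs0 : P {ω | R ω = 1} ≠ 0 := hlam_pos.ne'
  set μ₁ : Measure Ω := ProbabilityTheory.cond P {ω | R ω = 1} with hμ₁def
  haveI : IsProbabilityMeasure μ₁ := cond_isProbabilityMeasure hPs0
  -- basic facts about Yt t
  have hYtm : Measurable (Yt t) := by
    rcases ht with rfl | rfl
    · rw [hYt0]; exact hY₀m
    · rw [hYt1]; exact hY₁m
  have hYtP : Integrable (Yt t) P := by
    rcases ht with rfl | rfl
    · rw [hYt0]; exact hY₀2.integrable (by norm_num)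
    · rw [hYt1]; exact hY₁2.integrable (by norm_num)
  have hYtInt : Integrable (Yt t) μ₁ := by
    rw [hμ₁def, ProbabilityTheory.cond]
    exact (hYtP.restrict).smul_measure (ENNReal.inv_ne_top.mpr hPs0)
  have hYA : ∀ ω, T ω = t → Y ω = Yt t ω := by
    intro ω hTt
    rcases ht with rfl | rfl
    · rw [hY, hYt0]; simp [hTt]
    · rw [hY, hYt1]; simp [hTt]
  -- the conditional expectation as a function of X via condDistrib
  set g0 : 𝒳 → ℝ := fun x => ∫ y, y ∂(condDistrib (Yt t) X μ₁ x) with hg0def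
  have hg0m : Measurable g0 := by
    have hsm : StronglyMeasurable (fun p : 𝒳 × ℝ => p.2) :=
      measurable_snd.stronglyMeasurable
    exact (hsm.integral_kernel_prod_right').measurable
  have hmg0 : MeasureTheory.condExp (MeasurableSpace.comap X inferInstance) μ₁ (Yt t)
      =ᵐ[μ₁] fun ω => g0 (X ω) :=
    condExp_ae_eq_integral_condDistrib' hX hYtInt
  have hg0int : Integrable (fun ω => g0 (X ω)) μ₁ := integrable_condExp.congr hmg0
  -- independence of T and (Yt t, X) under μ₁
  have hInd : IndepFun T (fun ω => (Yt t ω, X ω)) μ₁ := by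
    have hζ : Measurable (fun z : ℝ × ℝ × 𝒳 => ((if t = 1 then z.1 else z.2.1), z.2.2)) := by
      refine Measurable.prodMk ?_ (measurable_snd.comp measurable_snd)
      split_ifs
      · exact measurable_fst
      · exact measurable_fst.comp measurable_snd
    have h2 := hA1.comp measurable_id hζ
    have he : (fun z : ℝ × ℝ × 𝒳 => ((if t = 1 then z.1 else z.2.1), z.2.2))
        ∘ (fun ω => (Y₁ ω, Y₀ ω, X ω)) = fun ω => (Yt t ω, X ω) := by
      funext ω
      rcases ht with rfl | rfl <;> norm_num [hYt0, hYt1, Function.comp]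
    rw [Function.id_comp, he] at h2
    exact h2
  constructor
  · -- orthogonality
    intro h hhm hbd
    obtain ⟨C, hC⟩ := hbd
    exact part1_aux P X R T Y (Yt t) hX hT hRbin hTbin {ω | R ω = 1} rfl hs1 hPs0 t ht
      hYA hYtInt g0 hg0m hmg0 hg0int hInd h hhm C hC
      (P {ω | R ω = 1}).toReal (μ₁ {ω' | T ω' = t}).toReal (∫ ω', Yt t ω' ∂μ₁)
  · -- the projection is in the subspace
    set lamR : ℝ := (P {ω | R ω = 1}).toReal with hlamdef
    set pit : ℝ := (μ₁ {ω' | T ω' = t}).toReal with hpitdef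
    set pi1 : ℝ := (μ₁ {ω' | T ω' = 1}).toReal with hpi1def
    set nu : ℝ := ∫ ω', Yt t ω' ∂μ₁ with hnudef
    refine ⟨fun x => (if t = 1 then (1 : ℝ) else -1) * ((g0 x - nu) / (lamR * pit)), ?_, ?_⟩
    · exact ((hg0m.sub measurable_const).div_const _).const_mul _
    · have haeP : ∀ᵐ ω ∂P, ω ∈ {ω | R ω = 1} →
          MeasureTheory.condExp (MeasurableSpace.comap X inferInstance) μ₁ (Yt t) ω
            = g0 (X ω) := by
        apply ae_imp_of_ae_restrict
        have hc : (P {ω | R ω = 1})⁻¹ ≠ 0 := ENNReal.inv_ne_zero.mpr (measure_ne_top P _)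
        have h' := hmg0
        rw [hμ₁def, ProbabilityTheory.cond] at h'
        exact ae_iff.2 (by
          have := ae_iff.1 h'
          rwa [Measure.smul_apply, smul_eq_mul, mul_eq_zero, or_iff_right hc] at this)
      filter_upwards [haeP] with ω hω
      show (if t = 1 then (1 : ℝ) else -1) *
          (R ω * (T ω - pi1) / (lamR * pit)) *
          (cexp (sigmaX X) μ₁ (Yt t) ω - nu)
        = R ω * (T ω - pi1) *
          ((if t = 1 then (1 : ℝ) else -1) * ((g0 (X ω) - nu) / (lamR * pit)))
      rcases hRbin ω with h0 | h1
      · rw [h0]; ring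
      · have hmω : cexp (sigmaX X) μ₁ (Yt t) ω = g0 (X ω) := hω h1
        rw [h1, hmω]
        ring
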